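/- Conversely, if D ∈ S^n satisfies diag(D) = 0 and −v^T D v ≥ 0 for all v with v^T e = 0, then there exist points w_1,…,w_n ∈ R^r with r = rank(JDJ), J = I − (1/n)ee^T, such that D_{ij} = ‖w_i − w_j‖² for all i,j (Schoenberg's theorem). -/

import Mathlib

open Matrix BigOperators

private lemma rank_smul_aux {m l : Type*} [Fintype l] (c : ℝ) (hc : c ≠ 0)
    (A : Matrix m l ℝ) : (c • A).rank = A.rank := by
  have h : (c • A).mulVecLin = c • A.mulVecLin := by
    ext x
    simp [Matrix.mulVecLin_apply, Matrix.smul_mulVec]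
  rw [Matrix.rank, Matrix.rank, h, LinearMap.range_smul _ c hc]

theorem schoenberg (n : ℕ) (D : Matrix (Fin n) (Fin n) ℝ)
    (hsymm : D.IsSymm)
    (hdiag : ∀ i, D i i = 0)
    (hK : ∀ v : Fin n → ℝ, (∑ i, v i) = 0 → 0 ≤ -(v ⬝ᵥ D *ᵥ v)) :
    ∃ w : Fin n →
        EuclideanSpace ℝ
          (Fin (((1 - (n : ℝ)⁻¹ • (Matrix.of fun _ _ => (1 : ℝ))) * D *
              (1 - (n : ℝ)⁻¹ • (Matrix.of fun _ _ => (1 : ℝ)))).rank)),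
      ∀ i j, D i j = ‖w i - w j‖ ^ 2 := by
  classical
  set E : Matrix (Fin n) (Fin n) ℝ := Matrix.of fun _ _ => (1:ℝ) with hE
  set J : Matrix (Fin n) (Fin n) ℝ := 1 - (n:ℝ)⁻¹ • E with hJ
  set M : Matrix (Fin n) (Fin n) ℝ := J * D * J with hMdef
  have hsym' : ∀ a b, D a b = D b a := fun a b => by
    conv_lhs => rw [← hsymm]
    rfl
  have hJT : Jᵀ = J := by
    rw [hJ, transpose_sub, transpose_one, transpose_smul]
    rfl
  -- expansion of M
  have hMexp : M = D - (n:ℝ)⁻¹ • (D*E) - (n:ℝ)⁻¹ • (E*D)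
      + (n:ℝ)⁻¹ • ((n:ℝ)⁻¹ • (E*(D*E))) := by
    rw [hMdef, hJ]
    simp only [sub_mul, mul_sub, one_mul, mul_one, smul_mul_assoc, mul_smul_comm,
      smul_sub, mul_assoc]
    abel
  have hMentry : ∀ i j, M i j = D i j - (n:ℝ)⁻¹ * (∑ k, D i k)
      - (n:ℝ)⁻¹ * (∑ k, D j k)
      + (n:ℝ)⁻¹ * ((n:ℝ)⁻¹ * (∑ k, ∑ l, D k l)) := by
    intro i j
    rw [hMexp]
    have h1 : (D*E) i j = ∑ k, D i k := by simp [Matrix.mul_apply, hE]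
    have h2 : (E*D) i j = ∑ k, D j k := by
      simp only [Matrix.mul_apply, hE, Matrix.of_apply, one_mul]
      exact Finset.sum_congr rfl fun k _ => hsym' k j
    have h3 : (E*(D*E)) i j = ∑ k, ∑ l, D k l := by
      simp [Matrix.mul_apply, hE]
    simp only [Matrix.add_apply, Matrix.sub_apply, Matrix.smul_apply, smul_eq_mul,
      h1, h2, h3]
  set G : Matrix (Fin n) (Fin n) ℝ := (-(1/2) : ℝ) • M with hGdef
  have key : ∀ i j, D i j = G i i + G j j - 2 * G i j := by
    intro i j
    simp only [hGdef, Matrix.smul_apply, smul_eq_mul]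
    rw [hMentry i i, hMentry j j, hMentry i j, hdiag i, hdiag j]
    ring
  -- sum of (J *ᵥ x) is zero
  have hsum : ∀ x : Fin n → ℝ, (∑ i, (J *ᵥ x) i) = 0 := by
    intro x
    have happ : ∀ i, (J *ᵥ x) i = x i - (n:ℝ)⁻¹ * ∑ j, x j := by
      intro i
      simp [hJ, Matrix.sub_mulVec, Matrix.smul_mulVec, Matrix.one_mulVec,
        Matrix.mulVec, dotProduct, hE, Matrix.one_apply, sub_mul,
        Finset.sum_sub_distrib, Finset.sum_ite_eq, Finset.mul_sum]
    simp only [happ, Finset.sum_sub_distrib, Finset.sum_const, Finset.card_univ,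
      Fintype.card_fin, nsmul_eq_mul]
    rcases Nat.eq_zero_or_pos n with hn | hn
    · subst hn; simp
    · have : (n:ℝ) ≠ 0 := Nat.cast_ne_zero.mpr hn.ne'
      field_simp
      ring
  -- quadratic form identity
  have hquad : ∀ x : Fin n → ℝ, x ⬝ᵥ M *ᵥ x = (J *ᵥ x) ⬝ᵥ D *ᵥ (J *ᵥ x) := by
    intro x
    rw [hMdef, ← Matrix.mulVec_mulVec, ← Matrix.mulVec_mulVec,
      Matrix.dotProduct_mulVec x J, ← Matrix.mulVec_transpose, hJT]
  have hG : G.PosSemidef := by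
    refine Matrix.PosSemidef.of_dotProduct_mulVec_nonneg ?_ ?_
    · show Gᴴ = G
      rw [hGdef, conjTranspose_smul, hMdef]
      rw [show ((J*D*J)ᴴ : Matrix (Fin n) (Fin n) ℝ) = Jᵀ*Dᵀ*Jᵀ by
        simp [conjTranspose_mul, Matrix.mul_assoc]]
      rw [hJT, hsymm]
      simp
    · intro x
      have hx : star x = x := by simp
      rw [hx, hGdef, Matrix.smul_mulVec, dotProduct_smul, hquad]
      have := hK (J *ᵥ x) (hsum x)
      simp only [smul_eq_mul]
      nlinarith
  obtain ⟨B, hB⟩ : ∃ B : Matrix (Fin n) (Fin n) ℝ, G = Bᴴ * B := by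
    open scoped MatrixOrder Matrix.Norms.L2Operator in
    exact CStarAlgebra.nonneg_iff_eq_star_mul_self.mp hG.nonneg
  -- Gram identity
  have hGram : ∀ i j, G i j = ∑ k, B k i * B k j := by
    intro i j
    rw [hB]
    simp [Matrix.mul_apply, Matrix.conjTranspose_apply]
  -- the points in EuclideanSpace ℝ (Fin n)
  set u : Fin n → EuclideanSpace ℝ (Fin n) := fun i => WithLp.toLp 2 (Bᵀ i) with hu
  have hinner : ∀ i j, inner ℝ (u i) (u j) = G i j := by
    intro i j
    rw [hGram]
    simp [hu, PiLp.inner_apply, RCLike.inner_apply, Matrix.transpose_apply, mul_comm]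
  set S : Submodule ℝ (EuclideanSpace ℝ (Fin n)) := Submodule.span ℝ (Set.range u) with hS
  have hfr : Module.finrank ℝ S = M.rank := by
    have h1 : M.rank = G.rank := (rank_smul_aux _ (by norm_num) M).symm
    have h2 : G.rank = B.rank := by rw [hB]; exact Matrix.rank_conjTranspose_mul_self B
    have h3 : B.rank = Module.finrank ℝ (Submodule.span ℝ (Set.range Bᵀ)) :=
      Matrix.rank_eq_finrank_span_cols B
    rw [h1, h2, h3]
    rw [hS, hu]
    have : Set.range (fun i => (WithLp.toLp 2 (Bᵀ i) : EuclideanSpace ℝ (Fin n))) = ((WithLp.linearEquiv 2 ℝ (Fin n → ℝ)).symm : (Fin n → ℝ) →ₗ[ℝ] EuclideanSpace ℝ (Fin n)) '' Set.range Bᵀ := by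
      ext y
      constructor
      · rintro ⟨i, rfl⟩; exact ⟨Bᵀ i, ⟨i, rfl⟩, rfl⟩
      · rintro ⟨_, ⟨i, rfl⟩, rfl⟩; exact ⟨i, rfl⟩
    rw [this, Submodule.span_image, LinearEquiv.finrank_map_eq]
  rw [← hfr]
  have hmem : ∀ i, u i ∈ S := fun i => Submodule.subset_span ⟨i, rfl⟩
  refine ⟨fun i => (stdOrthonormalBasis ℝ S).repr ⟨u i, hmem i⟩, fun i j => ?_⟩
  have hnorm : ‖(stdOrthonormalBasis ℝ S).repr ⟨u i, hmem i⟩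
      - (stdOrthonormalBasis ℝ S).repr ⟨u j, hmem j⟩‖ = ‖u i - u j‖ := by
    rw [← map_sub, LinearIsometryEquiv.norm_map]
    rfl
  rw [hnorm, ← real_inner_self_eq_norm_sq]
  rw [inner_sub_sub_self]
  rw [hinner i i, hinner i j, hinner j i, hinner j j, key i j]
  have : G j i = G i j := by
    rw [hGram, hGram]
    exact Finset.sum_congr rfl fun k _ => mul_comm _ _
  rw [this]
  ring
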